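/- For all integers n ≥ 1 and m ≥ 2, there exists an octahedral system without isolated vertex on vertex sets V_1,…,V_n with |V_i| = m for all i having at most min(m², n(m − 2) + 2) edges. -/

import Mathlib

open Finset

namespace OctAux

def Vtx (m : ℕ) {n : ℕ} (i : Fin n) : Finset ℕ := Finset.Ico (i.val * m) (i.val * m + m)

lemma filter_pair_card {m k : ℕ} {X : Finset ℕ} (hX : X ⊆ Finset.Ico k (k + m))
    (hc : X.card = 2) : ((Finset.range m).filter (fun t => k + t ∈ X)).card = 2 := by
  rw [← hc]
  apply Finset.card_bij (fun t _ => k + t)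
  · intro a ha
    exact (Finset.mem_filter.mp ha).2
  · intro a ha b hb h
    omega
  · intro b hb
    have hb' := hX hb
    rw [Finset.mem_Ico] at hb'
    refine ⟨b - k, Finset.mem_filter.mpr ⟨Finset.mem_range.mpr (by omega), by
      have : k + (b - k) = b := by omega
      rw [this]; exact hb⟩, by omega⟩

lemma even_cast_zmod {k : ℕ} : ((k : ZMod 2) = 0) ↔ Even k := by
  rw [ZMod.natCast_eq_zero_iff]
  exact (even_iff_two_dvd).symm

def DD (n i : ℕ) : Finset ℕ :=
  (if i + 1 < n then {0} else ∅) ∪ (if 0 < i then {1} else ∅)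

lemma mem_DD {n i x : ℕ} : x ∈ DD n i ↔ (x = 0 ∧ i + 1 < n) ∨ (x = 1 ∧ 0 < i) := by
  simp only [DD, Finset.mem_union]
  split_ifs <;> simp <;> omega

def TT (n m i : ℕ) : Finset ℕ := Finset.range m \ DD n i

lemma DD_subset {n m i : ℕ} (hm : 2 ≤ m) : DD n i ⊆ Finset.range m := by
  intro x hx
  rw [mem_DD] at hx
  rw [Finset.mem_range]
  omega


lemma mem_TT {n m i x : ℕ} : x ∈ TT n m i ↔ x < m ∧ ¬((x = 0 ∧ i + 1 < n) ∨ (x = 1 ∧ 0 < i)) := by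
  simp [TT, mem_DD]

def fB (m : ℕ) {n : ℕ} : (Σ _ : ℕ, ℕ) → (Fin n → ℕ) :=
  fun s j => j.val * m + (if j.val < s.1 then 0 else if s.1 < j.val then 1 else s.2)

def SB (n m : ℕ) : Finset (Σ _ : ℕ, ℕ) := (Finset.range n).sigma (TT n m)

def EB (n m : ℕ) : Finset (Fin n → ℕ) := (SB n m).image (fB m)

lemma fB_injOn {m n : ℕ} : Set.InjOn (fB m (n := n)) (SB n m) := by
  rintro ⟨i, t⟩ ha ⟨i', t'⟩ hb h
  simp only [Finset.coe_sigma, Set.mem_sigma_iff, Finset.mem_coe, Finset.mem_range, mem_TT,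
    SB] at ha hb
  obtain ⟨hi, ht, htD⟩ := ha
  obtain ⟨hi', ht', htD'⟩ := hb
  rcases lt_trichotomy i i' with hlt | heq | hgt
  · exfalso
    have hc := congrFun h ⟨i, hi⟩
    simp only [fB] at hc
    have ht0 : t = 0 := by split_ifs at hc <;> omega
    exact htD (by omega)
  · obtain rfl := heq
    have hc := congrFun h ⟨i, hi⟩
    simp only [fB] at hc
    have : t = t' := by split_ifs at hc <;> omega
    rw [this]
  · exfalso
    have hc := congrFun h ⟨i', hi'⟩
    simp only [fB] at hc
    have ht0 : t' = 0 := by split_ifs at hc <;> omega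
    exact htD' (by omega)

lemma qB_iff {m n : ℕ} {X : Fin n → Finset ℕ} {i t : ℕ} (hi : i < n) :
    (∀ j, fB m ⟨i, t⟩ j ∈ X j) ↔
      ((∀ j : Fin n, j.val ≠ i → (j.val * m + (if j.val < i then 0 else 1)) ∈ X j)
        ∧ i * m + t ∈ X ⟨i, hi⟩) := by
  constructor
  · intro h
    refine ⟨fun j hj => ?_, ?_⟩
    · have hh := h j
      simp only [fB] at hh
      rcases lt_or_gt_of_ne hj with hlt | hgt
      · rw [if_pos hlt] at hh ⊢
        exact hh
      · rw [if_neg (by omega)] at hh ⊢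
        rwa [if_pos hgt] at hh
    · have hh := h ⟨i, hi⟩
      simpa [fB] using hh
  · rintro ⟨hA, hT⟩ j
    simp only [fB]
    rcases lt_trichotomy j.val i with hlt | heq | hgt
    · rw [if_pos hlt]
      have hh := hA j (by omega)
      rwa [if_pos hlt] at hh
    · rw [if_neg (by omega), if_neg (by omega)]
      have hj : j = ⟨i, hi⟩ := Fin.ext heq
      rw [hj]
      exact hT
    · rw [if_neg (by omega), if_pos hgt]
      have hh := hA j (by omega)
      rwa [if_neg (by omega)] at hh

lemma qB_shift {m n : ℕ} {X : Fin n → Finset ℕ} {k : ℕ} :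
    (∀ j, fB m ⟨k, 0⟩ j ∈ X j) ↔ (∀ j, fB m ⟨1 + k, 1⟩ j ∈ X j) := by
  apply forall_congr'
  intro j
  have hv : (if j.val < k then 0 else if k < j.val then 1 else 0)
       = (if j.val < 1 + k then 0 else if 1 + k < j.val then 1 else 1) := by
    split_ifs <;> omega
  simp only [fB]
  rw [hv]

lemma shift_sum {n : ℕ} {M : Type*} [AddCommMonoid M] (u w : ℕ → M)
    (h : ∀ k, k + 1 < n → u k = w (1 + k)) :
    (∑ i ∈ Finset.range n, (if i + 1 < n then u i else 0))
      = ∑ i ∈ Finset.range n, (if 0 < i then w i else 0) := by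
  rw [← Finset.sum_filter, ← Finset.sum_filter]
  rw [show (Finset.range n).filter (fun i => i + 1 < n) = Finset.range (n - 1) by
    ext a; simp; omega]
  rw [show (Finset.range n).filter (fun i => 0 < i) = Finset.Ico 1 n by
    ext a; simp; omega]
  rw [Finset.sum_Ico_eq_sum_range]
  apply Finset.sum_congr rfl
  intro k hk
  rw [Finset.mem_range] at hk
  exact h k (by omega)

lemma EB_parity {m n : ℕ} (hn : 1 ≤ n) (hm : 2 ≤ m) :
    ∀ X : Fin n → Finset ℕ, (∀ i, X i ⊆ Vtx m i) → (∀ i, (X i).card = 2) →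
      Even (((EB n m).filter fun e => ∀ i, e i ∈ X i).card) := by
  intro X hXs hXc
  rw [EB, Finset.filter_image,
    Finset.card_image_of_injOn (fB_injOn.mono (by exact_mod_cast Finset.filter_subset _ _))]
  rw [← even_cast_zmod, Finset.card_filter]
  push_cast
  rw [SB, Finset.sum_sigma]
  have inner : ∀ i ∈ Finset.range n,
      (∑ t ∈ TT n m i, (if (∀ j, fB m ⟨i, t⟩ j ∈ X j) then (1 : ZMod 2) else 0)) =
      -((if i + 1 < n then (if (∀ j, fB m ⟨i, 0⟩ j ∈ X j) then (1 : ZMod 2) else 0) else 0)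
        + (if 0 < i then (if (∀ j, fB m ⟨i, 1⟩ j ∈ X j) then (1 : ZMod 2) else 0) else 0)) := by
    intro i hi
    rw [Finset.mem_range] at hi
    rw [TT, Finset.sum_sdiff_eq_sub (DD_subset hm)]
    have hfull : (∑ t ∈ Finset.range m,
        (if (∀ j, fB m ⟨i, t⟩ j ∈ X j) then (1 : ZMod 2) else 0)) = 0 := by
      rw [Finset.sum_boole, even_cast_zmod]
      by_cases hA : ∀ j : Fin n, j.val ≠ i → (j.val * m + (if j.val < i then 0 else 1)) ∈ X j
      · have heq : (Finset.range m).filter (fun t => ∀ j, fB m ⟨i, t⟩ j ∈ X j)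
            = (Finset.range m).filter (fun t => i * m + t ∈ X ⟨i, hi⟩) := by
          apply Finset.filter_congr
          intro t _
          rw [qB_iff hi]
          exact and_iff_right hA
        rw [heq, filter_pair_card ?_ (hXc ⟨i, hi⟩)]
        · exact ⟨1, rfl⟩
        · have := hXs ⟨i, hi⟩
          simpa [Vtx] using this
      · have heq : (Finset.range m).filter (fun t => ∀ j, fB m ⟨i, t⟩ j ∈ X j) = ∅ := by
          apply Finset.filter_false_of_mem
          intro t _ hq
          exact hA ((qB_iff hi).mp hq).1
        rw [heq]
        simp
    have hD : (∑ t ∈ DD n i, (if (∀ j, fB m ⟨i, t⟩ j ∈ X j) then (1 : ZMod 2) else 0)) =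
        (if i + 1 < n then (if (∀ j, fB m ⟨i, 0⟩ j ∈ X j) then (1 : ZMod 2) else 0) else 0)
        + (if 0 < i then (if (∀ j, fB m ⟨i, 1⟩ j ∈ X j) then (1 : ZMod 2) else 0) else 0) := by
      by_cases h1 : i + 1 < n <;> by_cases h2 : 0 < i
      · rw [if_pos h1, if_pos h2, DD, if_pos h1, if_pos h2, show ({0} : Finset ℕ) ∪ {1} = {0, 1} by decide,
          Finset.sum_insert (by decide), Finset.sum_singleton]
      · rw [if_pos h1, if_neg h2, DD, if_pos h1, if_neg h2, Finset.union_empty,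
          Finset.sum_singleton, add_zero]
      · rw [if_neg h1, if_pos h2, DD, if_neg h1, if_pos h2, Finset.empty_union,
          Finset.sum_singleton, zero_add]
      · rw [if_neg h1, if_neg h2, DD, if_neg h1, if_neg h2, Finset.union_empty,
          Finset.sum_empty, add_zero]
    rw [hfull, hD]
    ring
  rw [Finset.sum_congr rfl inner]
  rw [Finset.sum_neg_distrib, neg_eq_zero, Finset.sum_add_distrib]
  have hS := shift_sum (n := n)
    (fun i => (if (∀ j, fB m ⟨i, 0⟩ j ∈ X j) then (1 : ZMod 2) else 0))
    (fun i => (if (∀ j, fB m ⟨i, 1⟩ j ∈ X j) then (1 : ZMod 2) else 0))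
    (fun k hk => if_congr qB_shift rfl rfl)
  rw [hS]
  exact CharTwo.add_self_eq_zero _

lemma EB_mem_Vtx {m n : ℕ} (hm : 2 ≤ m) : ∀ e ∈ EB n m, ∀ j, e j ∈ Vtx m j := by
  intro e he j
  simp only [EB, Finset.mem_image] at he
  obtain ⟨⟨i, t⟩, hs, rfl⟩ := he
  simp only [SB, Finset.mem_sigma, Finset.mem_range, mem_TT] at hs
  simp only [fB, Vtx, Finset.mem_Ico]
  refine ⟨Nat.le_add_right _ _, Nat.add_lt_add_left ?_ _⟩
  split_ifs <;> omega

lemma EB_noiso {m n : ℕ} (hn : 1 ≤ n) (hm : 2 ≤ m) :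
    ∀ i : Fin n, ∀ v ∈ Vtx m i, ∃ e ∈ EB n m, e i = v := by
  intro i v hv
  simp only [Vtx, Finset.mem_Ico] at hv
  have hiv : i.val < n := i.isLt
  -- w := v - i*m
  rcases (show v - i.val * m = 0 ∨ v - i.val * m = 1 ∨ (2 ≤ v - i.val * m ∧ v - i.val * m < m)
    by omega) with hw | hw | hw
  · -- use the line through coordinate n-1 with value 0
    refine ⟨fB m ⟨n - 1, 0⟩, Finset.mem_image_of_mem _ ?_, ?_⟩
    · simp only [SB, Finset.mem_sigma, Finset.mem_range, mem_TT]
      exact ⟨by omega, by omega, by omega⟩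
    · simp only [fB]
      split_ifs <;> omega
  · -- line through coordinate 0 with value 1
    refine ⟨fB m ⟨0, 1⟩, Finset.mem_image_of_mem _ ?_, ?_⟩
    · simp only [SB, Finset.mem_sigma, Finset.mem_range, mem_TT]
      exact ⟨by omega, by omega, by omega⟩
    · simp only [fB]
      split_ifs <;> omega
  · -- own line
    refine ⟨fB m ⟨i.val, v - i.val * m⟩, Finset.mem_image_of_mem _ ?_, ?_⟩
    · simp only [SB, Finset.mem_sigma, Finset.mem_range, mem_TT]
      exact ⟨by omega, by omega, by omega⟩
    · simp only [fB]
      split_ifs <;> omega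

lemma EB_card {m n : ℕ} (hn : 1 ≤ n) (hm : 2 ≤ m) : (EB n m).card ≤ n * (m - 2) + 2 := by
  have h1 : (EB n m).card ≤ (SB n m).card := Finset.card_image_le
  rw [SB, Finset.card_sigma] at h1
  have h2 : ∀ i ∈ Finset.range n, (TT n m i).card ≤
      (m - 2) + ((if i = 0 then 1 else 0) + (if i = n - 1 then 1 else 0)) := by
    intro i hi
    rw [Finset.mem_range] at hi
    rw [TT, Finset.card_sdiff_of_subset (DD_subset hm), Finset.card_range]
    have hDc : (DD n i).card = (if i + 1 < n then 1 else 0) + (if 0 < i then 1 else 0) := by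
      rw [DD]
      split_ifs with hc1 hc2 hc2
      · rw [show ({0} : Finset ℕ) ∪ {1} = {0, 1} by decide]; decide
      · simp
      · simp
      · simp
    rw [hDc]
    split_ifs <;> omega
  calc (EB n m).card ≤ ∑ i ∈ Finset.range n, (TT n m i).card := h1
    _ ≤ ∑ i ∈ Finset.range n,
        ((m - 2) + ((if i = 0 then 1 else 0) + (if i = n - 1 then 1 else 0))) :=
        Finset.sum_le_sum h2
    _ = n * (m - 2) + 2 := by
        rw [Finset.sum_add_distrib, Finset.sum_add_distrib, Finset.sum_const,
          Finset.card_range, Finset.sum_ite_eq' (Finset.range n) 0 (fun _ => 1),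
          Finset.sum_ite_eq' (Finset.range n) (n - 1) (fun _ => 1)]
        simp only [Finset.mem_range, smul_eq_mul]
        rw [if_pos (by omega), if_pos (by omega)]

/-- Construction A: m^2 edges, for n ≥ 2. -/
def fA (m : ℕ) {n : ℕ} : ℕ × ℕ → (Fin n → ℕ) :=
  fun av j => if j.val = 0 then av.1 else j.val * m + av.2

def EA (m : ℕ) (n : ℕ) : Finset (Fin n → ℕ) :=
  ((Finset.range m) ×ˢ (Finset.range m)).image (fA m)

lemma fA_injOn {m n : ℕ} (hn : 2 ≤ n) :
    Set.InjOn (fA m (n := n)) ((Finset.range m) ×ˢ (Finset.range m)) := by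
  rintro ⟨a, v⟩ _ ⟨b, w⟩ _ h
  have h0 := congrFun h ⟨0, by omega⟩
  have h1 := congrFun h ⟨1, by omega⟩
  simp only [fA] at h0 h1
  norm_num at h0 h1
  simp_all

lemma EA_mem_Vtx {m n : ℕ} (hm : 2 ≤ m) : ∀ e ∈ EA m n, ∀ i, e i ∈ Vtx m i := by
  intro e he i
  simp only [EA, Finset.mem_image, Finset.mem_product, Finset.mem_range] at he
  obtain ⟨⟨a, v⟩, ⟨ha, hv⟩, rfl⟩ := he
  simp only [fA, Vtx, Finset.mem_Ico]
  split_ifs with h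
  · rw [h]; simp; omega
  · exact ⟨Nat.le_add_right _ _, by omega⟩

lemma EA_card {m n : ℕ} : (EA m n).card ≤ m ^ 2 := by
  calc (EA m n).card ≤ ((Finset.range m) ×ˢ (Finset.range m)).card := Finset.card_image_le
  _ = m ^ 2 := by simp [sq]

lemma EA_parity {m n : ℕ} (hn : 2 ≤ n) (hm : 2 ≤ m) :
    ∀ X : Fin n → Finset ℕ, (∀ i, X i ⊆ Vtx m i) → (∀ i, (X i).card = 2) →
      Even (((EA m n).filter fun e => ∀ i, e i ∈ X i).card) := by
  intro X hXs hXc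
  rw [EA, Finset.filter_image,
    Finset.card_image_of_injOn ((fA_injOn hn).mono (by
      exact_mod_cast Finset.filter_subset _ _))]
  set i0 : Fin n := ⟨0, by omega⟩ with hi0
  have hcongr : ∀ av ∈ (Finset.range m) ×ˢ (Finset.range m),
      (∀ i, fA m av i ∈ X i) ↔ ((av.1 ∈ X i0) ∧ (∀ j : Fin n, 0 < j.val → j.val * m + av.2 ∈ X j)) := by
    rintro ⟨a, v⟩ _
    constructor
    · intro h
      refine ⟨by simpa [fA, hi0] using h i0, fun j hj => by simpa [fA, Nat.pos_iff_ne_zero.mp hj] using h j⟩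
    · rintro ⟨h1, h2⟩ j
      by_cases hj : j.val = 0
      · have : j = i0 := Fin.ext (by simp [hi0, hj])
        simpa [fA, hj, this, hi0] using h1
      · simpa [fA, hj] using h2 j (by omega)
  rw [Finset.filter_congr hcongr]
  rw [Finset.filter_product (fun a => a ∈ X i0) (fun v => ∀ j : Fin n, 0 < j.val → j.val * m + v ∈ X j)]
  rw [Finset.card_product]
  have hX0 : (Finset.range m).filter (fun a => a ∈ X i0) = X i0 := by
    ext t
    simp only [Finset.mem_filter, Finset.mem_range, and_iff_right_iff_imp]
    intro ht
    have := hXs i0 ht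
    simp only [Vtx, hi0, Finset.mem_Ico] at this
    omega
  rw [hX0, hXc i0]
  exact ⟨_, (two_mul _)⟩

lemma EA_noiso {m n : ℕ} (hn : 2 ≤ n) (hm : 2 ≤ m) :
    ∀ i : Fin n, ∀ v ∈ Vtx m i, ∃ e ∈ EA m n, e i = v := by
  intro i v hv
  simp only [Vtx, Finset.mem_Ico] at hv
  by_cases hi : i.val = 0
  · refine ⟨fA m (v, 0), ?_, by simp [fA, hi]⟩
    apply Finset.mem_image_of_mem
    simp only [Finset.mem_product, Finset.mem_range]
    rw [hi] at hv
    constructor <;> omega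
  · refine ⟨fA m (0, v - i.val * m), ?_, by simp [fA, hi]; omega⟩
    apply Finset.mem_image_of_mem
    simp only [Finset.mem_product, Finset.mem_range]
    constructor <;> omega

lemma Vtx_card {n m : ℕ} (i : Fin n) : (Vtx m i).card = m := by
  simp [Vtx]

lemma Vtx_disjoint {n m : ℕ} : ∀ i j : Fin n, i ≠ j → Disjoint (Vtx m i) (Vtx m j) := by
  have key : ∀ i j : Fin n, i.val < j.val → Disjoint (Vtx m i) (Vtx m j) := by
    intro i j hij
    rw [Finset.disjoint_left]
    intro a ha hb
    simp only [Vtx, Finset.mem_Ico] at ha hb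
    have h1 : (i.val + 1) * m ≤ j.val * m := Nat.mul_le_mul_right m hij
    rw [Nat.succ_mul] at h1
    omega
  intro i j hij
  rcases lt_trichotomy i.val j.val with h | h | h
  · exact key i j h
  · exact absurd (Fin.ext h) hij
  · exact (key j i h).symm


end OctAux

/-- An octahedral system: an `n`-uniform `n`-partite hypergraph on the vertex sets `V i`
(edges pick one vertex from each `V i`) satisfying the parity condition. -/
def IsOctahedralSystem {α : Type*} [DecidableEq α] {n : ℕ}
    (V : Fin n → Finset α) (E : Finset (Fin n → α)) : Prop :=
  (∀ e ∈ E, ∀ i, e i ∈ V i) ∧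
  ∀ X : Fin n → Finset α, (∀ i, X i ⊆ V i) → (∀ i, (X i).card = 2) →
    Even ((E.filter fun e => ∀ i, e i ∈ X i).card)

/-- Every vertex belongs to at least one edge. -/
def NoIsolatedVertex {α : Type*} {n : ℕ}
    (V : Fin n → Finset α) (E : Finset (Fin n → α)) : Prop :=
  ∀ i : Fin n, ∀ v ∈ V i, ∃ e ∈ E, e i = v

/-- For all `n ≥ 1` and `m ≥ 2` there exists an octahedral system without
isolated vertex with `|V_i| = m` for all `i` having at most
`min(m², n(m − 2) + 2)` edges. -/
theorem octahedral_exists_upper_bound {n m : ℕ} (hn : 1 ≤ n) (hm : 2 ≤ m) :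
    ∃ (V : Fin n → Finset ℕ) (E : Finset (Fin n → ℕ)),
      (∀ i j : Fin n, i ≠ j → Disjoint (V i) (V j)) ∧
      (∀ i, (V i).card = m) ∧
      IsOctahedralSystem V E ∧
      NoIsolatedVertex V E ∧
      E.card ≤ min (m ^ 2) (n * (m - 2) + 2) := by
  rcases le_or_gt (n * (m - 2) + 2) (m ^ 2) with h | h
  · refine ⟨OctAux.Vtx m, OctAux.EB n m, OctAux.Vtx_disjoint, OctAux.Vtx_card,
      ⟨OctAux.EB_mem_Vtx hm, OctAux.EB_parity hn hm⟩, OctAux.EB_noiso hn hm,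
      le_min ((OctAux.EB_card hn hm).trans h) (OctAux.EB_card hn hm)⟩
  · have hn2 : 2 ≤ n := by
      by_contra hc
      have hn1 : n = 1 := by omega
      rw [hn1, one_mul] at h
      have hmm : m ≤ m ^ 2 := by nlinarith
      omega
    refine ⟨OctAux.Vtx m, OctAux.EA m n, OctAux.Vtx_disjoint, OctAux.Vtx_card,
      ⟨OctAux.EA_mem_Vtx hm, OctAux.EA_parity hn2 hm⟩, OctAux.EA_noiso hn2 hm,
      le_min OctAux.EA_card (OctAux.EA_card.trans h.le)⟩
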